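/- Contiguous relation I: let q ∈ (0,1), n ≥ 1 an integer, and a, b real numbers with a q^j ≠ 1 for j = 1, …, n+1. Then the polynomial identity −p_n(x; a, q²b) = [a(1 − q^n)(1 − a b q^{n+3}) / (q^{n−2} (1 − aq)(1 − aq²))] · x · p_{n−1}(x; q²a, q²b) − p_n(x; qa, qb) holds for all x. -/

import Mathlib

/-- The q-Pochhammer symbol `(a;q)_k = ∏_{j=0}^{k-1} (1 - a q^j)`. -/
noncomputable def qPoch (q a : ℝ) (k : ℕ) : ℝ :=
  ∏ j ∈ Finset.range k, (1 - a * q ^ j)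

/-- The little q-Jacobi polynomial
`p_n(x; a, b) = ∑_{k=0}^{n} [(q^{−n};q)_k (a b q^{n+1};q)_k / ((a q;q)_k (q;q)_k)] (q x)^k`. -/
noncomputable def littleQJacobi (q a b : ℝ) (n : ℕ) : Polynomial ℝ :=
  ∑ k ∈ Finset.range (n + 1),
    Polynomial.C (qPoch q (q ^ (-(n : ℤ))) k * qPoch q (a * b * q ^ (n + 1)) k /
      (qPoch q (a * q) k * qPoch q q k)) * (Polynomial.C q * Polynomial.X) ^ k

lemma qPoch_succ_left (q a : ℝ) (k : ℕ) :
    qPoch q a (k + 1) = (1 - a) * qPoch q (a * q) k := by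
  unfold qPoch
  rw [Finset.prod_range_succ']
  simp only [pow_zero, mul_one, pow_succ]
  rw [mul_comm]
  congr 1
  apply Finset.prod_congr rfl
  intro i _
  ring

lemma qPoch_succ_right (q a : ℝ) (k : ℕ) :
    qPoch q a (k + 1) = qPoch q a k * (1 - a * q ^ k) :=
  Finset.prod_range_succ _ _

lemma qPoch_q_ne_zero (q : ℝ) (hq0 : 0 < q) (hq1 : q < 1) (k : ℕ) :
    qPoch q q k ≠ 0 := by
  unfold qPoch
  apply Finset.prod_ne_zero_iff.mpr
  intro i _
  have : q * q ^ i < 1 := by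
    calc q * q ^ i ≤ q * 1 := by nlinarith [pow_le_one₀ hq0.le hq1.le (n := i)]
    _ < 1 := by linarith
  linarith

lemma qPoch_shift_ne_zero (q a : ℝ) (t s k : ℕ) (hs : 1 ≤ s) (hk : s + k ≤ t + 1)
    (ha : ∀ i : ℕ, 1 ≤ i → i ≤ t → a * q ^ i ≠ 1) :
    qPoch q (a * q ^ s) k ≠ 0 := by
  unfold qPoch
  apply Finset.prod_ne_zero_iff.mpr
  intro i hi
  simp only [Finset.mem_range] at hi
  have h1 : a * q ^ s * q ^ i = a * q ^ (s + i) := by rw [pow_add]; ring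
  rw [h1]
  have := ha (s + i) (by omega) (by omega)
  intro h
  exact this (by linarith)


/-- contiguous relation I:
`−p_n(x; a, q²b) = [a(1 − q^n)(1 − a b q^{n+3}) / (q^{n−2}(1 − aq)(1 − aq²))] · x ·
p_{n−1}(x; q²a, q²b) − p_n(x; qa, qb)`. -/
theorem littleQJacobi_contiguous_I (q a b : ℝ) (n : ℕ) (hn : 1 ≤ n)
    (hq0 : 0 < q) (hq1 : q < 1)
    (ha : ∀ j : ℕ, 1 ≤ j → j ≤ n + 1 → a * q ^ j ≠ 1) :
    ∀ x : ℝ,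
      -(littleQJacobi q a (q ^ 2 * b) n).eval x =
        a * (1 - q ^ n) * (1 - a * b * q ^ (n + 3)) /
            (q ^ ((n : ℤ) - 2) * (1 - a * q) * (1 - a * q ^ 2)) * x *
          (littleQJacobi q (q ^ 2 * a) (q ^ 2 * b) (n - 1)).eval x -
        (littleQJacobi q (q * a) (q * b) n).eval x := by
  obtain ⟨m, rfl⟩ : ∃ m, n = m + 1 := ⟨n - 1, (Nat.succ_pred_eq_of_pos hn).symm⟩
  intro x
  have hq : (q : ℝ) ≠ 0 := hq0.ne'
  simp only [littleQJacobi, Polynomial.eval_finset_sum, Polynomial.eval_mul,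
    Polynomial.eval_pow, Polynomial.eval_C, Polynomial.eval_X, Nat.add_sub_cancel]
  set A : ℝ := a * (1 - q ^ (m + 1)) * (1 - a * b * q ^ (m + 1 + 3)) /
      (q ^ (((m + 1 : ℕ) : ℤ) - 2) * (1 - a * q) * (1 - a * q ^ 2)) with hA
  rw [neg_eq_iff_eq_neg]
  rw [show ∀ u v w : ℝ, u = -(v - w) ↔ w - u = v from fun u v w => by constructor <;> intro h <;> linarith]
  rw [← Finset.sum_sub_distrib, Finset.mul_sum, Finset.sum_range_succ']
  have hzero : qPoch q (q ^ (-((m+1 : ℕ) : ℤ))) 0 * qPoch q (q * a * (q * b) * q ^ (m + 1 + 1)) 0 /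
        (qPoch q (q * a * q) 0 * qPoch q q 0) * (q * x) ^ 0 -
      qPoch q (q ^ (-((m+1 : ℕ) : ℤ))) 0 * qPoch q (a * (q ^ 2 * b) * q ^ (m + 1 + 1)) 0 /
        (qPoch q (a * q) 0 * qPoch q q 0) * (q * x) ^ 0 = 0 := by
    simp [qPoch]
  rw [hzero, add_zero]
  apply Finset.sum_congr rfl
  intro k hk
  simp only [Finset.mem_range] at hk
  -- nonvanishing facts
  have hT : qPoch q (a * q ^ 3) k ≠ 0 :=
    qPoch_shift_ne_zero q a (m + 2) 3 k (by omega) (by omega) ha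
  have hV : qPoch q q k ≠ 0 := qPoch_q_ne_zero q hq0 hq1 k
  have h1q : (1 : ℝ) - q ^ (k + 1) ≠ 0 := by
    have : q ^ (k + 1) < 1 := pow_lt_one₀ hq0.le hq1 (by omega)
    intro h; linarith
  have haq : (1 : ℝ) - a * q ≠ 0 := by
    have := ha 1 le_rfl (by omega)
    rw [pow_one] at this
    intro h; exact this (by linarith)
  have haq2 : (1 : ℝ) - a * q ^ 2 ≠ 0 := by
    have := ha 2 (by omega) (by omega)
    intro h; exact this (by linarith)
  have haqk2 : (1 : ℝ) - a * q ^ (k + 2) ≠ 0 := by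
    have := ha (k + 2) (by omega) (by omega)
    intro h; exact this (by linarith)
  -- canonicalize Pochhammer arguments
  rw [show q * a * (q * b) * q ^ (m + 1 + 1) = a * b * q ^ (m + 4) from by ring,
      show a * (q ^ 2 * b) * q ^ (m + 1 + 1) = a * b * q ^ (m + 4) from by ring,
      show q ^ 2 * a * (q ^ 2 * b) * q ^ (m + 1) = a * b * q ^ (m + 5) from by ring,
      show q * a * q = a * q ^ 2 from by ring,
      show q ^ 2 * a * q = a * q ^ 3 from by ring,
      show (q : ℝ) ^ (-((m + 1 : ℕ) : ℤ)) = (q ^ (m + 1))⁻¹ from by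
        rw [zpow_neg, zpow_natCast],
      show (q : ℝ) ^ (-((m : ℕ) : ℤ)) = (q ^ m)⁻¹ from by
        rw [zpow_neg, zpow_natCast]]
  rw [hA, show (q : ℝ) ^ (((m + 1 : ℕ) : ℤ) - 2) = q ^ (m + 1) / q ^ 2 from by
        rw [zpow_sub₀ hq, zpow_natCast]; norm_cast]
  -- peel the Pochhammer symbols
  rw [qPoch_succ_left q ((q ^ (m + 1))⁻¹) k,
      show ((q : ℝ) ^ (m + 1))⁻¹ * q = (q ^ m)⁻¹ from by
        rw [pow_succ, mul_inv]; field_simp,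
      qPoch_succ_left q (a * b * q ^ (m + 4)) k,
      show a * b * q ^ (m + 4) * q = a * b * q ^ (m + 5) from by rw [pow_succ]; ring,
      qPoch_succ_left q (a * q) k,
      show a * q * q = a * q ^ 2 from by ring,
      qPoch_succ_left q (a * q ^ 2) k,
      show a * q ^ 2 * q = a * q ^ 3 from by ring,
      qPoch_succ_right q q k,
      show q * q ^ k = q ^ (k + 1) from by rw [pow_succ]; ring]
  -- eliminate qPoch q (a*q^2) k via the two-sided peeling relation
  have hrel : qPoch q (a * q ^ 2) k * (1 - a * q ^ (k + 2)) =
      (1 - a * q ^ 2) * qPoch q (a * q ^ 3) k := by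
    have h1 := qPoch_succ_right q (a * q ^ 2) k
    have h2 := qPoch_succ_left q (a * q ^ 2) k
    rw [show a * q ^ 2 * q ^ k = a * q ^ (k + 2) from by rw [pow_add]; ring] at h1
    rw [show a * q ^ 2 * q = a * q ^ 3 from by ring] at h2
    rw [← h1, h2]
  rw [show qPoch q (a * q ^ 2) k = (1 - a * q ^ 2) * qPoch q (a * q ^ 3) k / (1 - a * q ^ (k + 2))
      from by rw [eq_div_iff haqk2]; exact hrel]
  have hqm : (q : ℝ) ^ m ≠ 0 := pow_ne_zero _ hq
  have hqm1 : (q : ℝ) ^ (m + 1) ≠ 0 := pow_ne_zero _ hq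
  field_simp
  ring
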